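/- Let V_h ⊂ V be a finite-dimensional subspace. If u_h ∈ V_h solves A(ω;u_h,v_h) = F(ω;v_h) for all v_h ∈ V_h and U_n^h ∈ V_h is generated by the discrete iteration A_0(U_0^h,v_h) = F(ω;v_h), A_0(U_n^h,v_h) = F(ω;v_h) − A_1(ω;U_{n−1}^h,v_h), then under the coercivity of A_0 (constant λ_0) and relative dominance ‖A_1(ω)‖/λ_0 ≤ ρ < 1, one has ‖u_h(ω) − U_n^h(ω)‖_V ≤ ρ^{n+1}‖u_h(ω)‖_V ≤ ρ^{n+1}‖F(ω)‖_{V*}/λ. -/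
import Mathlib


/-- A bilinear form on a real normed space, phrased via linearity in each slot. -/
def IsBilin {V : Type*} [NormedAddCommGroup V] [NormedSpace ℝ V] (B : V → V → ℝ) : Prop :=
  (∀ c : ℝ, ∀ u v w, B (c • u + v) w = c * B u w + B v w) ∧
  (∀ c : ℝ, ∀ u v w, B u (c • v + w) = c * B u v + B u w)

lemma IsBilin.sub_left {V : Type*} [NormedAddCommGroup V] [NormedSpace ℝ V]
    {B : V → V → ℝ} (h : IsBilin B) (u w x : V) : B (u - w) x = B u x - B w x := by
  have := h.1 (-1) w u x
  rw [neg_one_smul] at this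
  rw [sub_eq_neg_add, this]; ring

/-- Convergence of the discrete iteration on a subspace V_h:
‖u_h(ω) − Uₙʰ(ω)‖ ≤ ρ^{n+1}‖u_h(ω)‖ ≤ ρ^{n+1}‖F(ω)‖/λ. -/
theorem stmt4 {V Ω : Type*} [NormedAddCommGroup V] [InnerProductSpace ℝ V]
    (A A1 : Ω → V → V → ℝ) (A0 : V → V → ℝ) (F : Ω → V →L[ℝ] ℝ)
    (lam lam0 ρ : ℝ) (hlam : 0 < lam) (hlam0 : 0 < lam0)
    (hρ0 : 0 < ρ) (hρ1 : ρ < 1)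
    (hbilin0 : IsBilin A0) (hbilin1 : ∀ ω, IsBilin (A1 ω))
    (hsplit : ∀ ω v w, A ω v w = A0 v w + A1 ω v w)
    (hcoerA : ∀ ω v, lam * ‖v‖ ^ 2 ≤ A ω v v)
    (hcoer0 : ∀ v, lam0 * ‖v‖ ^ 2 ≤ A0 v v)
    (hA1bdd : ∀ ω v w, |A1 ω v w| ≤ ρ * lam0 * ‖v‖ * ‖w‖)
    (Vh : Submodule ℝ V) (ω : Ω)
    (uh : V) (huh_mem : uh ∈ Vh) (huh : ∀ v ∈ Vh, A ω uh v = F ω v)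
    (U : ℕ → V) (hU_mem : ∀ n, U n ∈ Vh)
    (hU0 : ∀ v ∈ Vh, A0 (U 0) v = F ω v)
    (hUn : ∀ n : ℕ, ∀ v ∈ Vh, A0 (U (n + 1)) v = F ω v - A1 ω (U n) v) :
    ∀ n : ℕ, ‖uh - U n‖ ≤ ρ ^ (n + 1) * ‖uh‖ ∧
      ρ ^ (n + 1) * ‖uh‖ ≤ ρ ^ (n + 1) * ‖F ω‖ / lam := by
  have key : ∀ e z : V, A0 e e = - A1 ω z e → ‖e‖ ≤ ρ * ‖z‖ := by
    intro e z h
    rcases eq_or_lt_of_le (norm_nonneg e) with h0 | h0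
    · rw [← h0]; positivity
    · have h1 : lam0 * ‖e‖ ^ 2 ≤ ρ * lam0 * ‖z‖ * ‖e‖ := by
        calc lam0 * ‖e‖ ^ 2 ≤ A0 e e := hcoer0 e
          _ ≤ |A1 ω z e| := by rw [h]; exact neg_le_abs _
          _ ≤ ρ * lam0 * ‖z‖ * ‖e‖ := hA1bdd ω z e
      by_contra hc
      push_neg at hc
      nlinarith [mul_pos hlam0 h0]
  have hFn : ‖uh‖ ≤ ‖F ω‖ / lam := by
    have h1 : lam * ‖uh‖ ^ 2 ≤ ‖F ω‖ * ‖uh‖ := by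
      calc lam * ‖uh‖ ^ 2 ≤ A ω uh uh := hcoerA ω uh
        _ = F ω uh := huh uh huh_mem
        _ ≤ ‖F ω‖ * ‖uh‖ := le_trans (le_abs_self _) ((F ω).le_opNorm uh)
    rcases eq_or_lt_of_le (norm_nonneg uh) with h0 | h0
    · rw [← h0]; positivity
    · rw [le_div_iff₀ hlam]; nlinarith
  have hrec : ∀ n, ‖uh - U n‖ ≤ ρ ^ (n + 1) * ‖uh‖ := by
    intro n
    induction n with
    | zero =>
      have hmem : uh - U 0 ∈ Vh := sub_mem huh_mem (hU_mem 0)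
      have he : A0 (uh - U 0) (uh - U 0) = - A1 ω uh (uh - U 0) := by
        rw [hbilin0.sub_left, hU0 _ hmem]
        have := huh _ hmem
        rw [hsplit] at this
        linarith
      simpa using key _ _ he
    | succ n ih =>
      have hmem : uh - U (n + 1) ∈ Vh := sub_mem huh_mem (hU_mem (n + 1))
      have he : A0 (uh - U (n + 1)) (uh - U (n + 1)) = - A1 ω (uh - U n) (uh - U (n + 1)) := by
        rw [hbilin0.sub_left, hUn n _ hmem, (hbilin1 ω).sub_left]
        have := huh _ hmem
        rw [hsplit] at this
        linarith
      calc ‖uh - U (n + 1)‖ ≤ ρ * ‖uh - U n‖ := key _ _ he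
        _ ≤ ρ * (ρ ^ (n + 1) * ‖uh‖) := mul_le_mul_of_nonneg_left ih hρ0.le
        _ = ρ ^ (n + 1 + 1) * ‖uh‖ := by ring
  intro n
  refine ⟨hrec n, ?_⟩
  rw [div_eq_mul_inv, mul_assoc]
  exact mul_le_mul_of_nonneg_left (by rw [← div_eq_mul_inv]; exact hFn) (by positivity)
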